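/- arXiv:1912.11880 — 2 statements merged into one kernel-verified Lean document; each statement's English description precedes it below -/
import Mathlib

section
/- Let f̂ : [τ₀,τ₁] × Ω → ℝᵏ be measurable in time and Lipschitz in the state variable with time-dependent Lipschitz constant φ(τ) ≥ 1 integrable, let t(τ) = t₀ + ∫_{τ₀}^τ φ(s)ds with inverse τ(t), and define ĝ(t, y) := φ(τ(t))⁻¹ f̂(τ(t), y). Then ∫_{t₀}^{t(τ₁)} ĝ(s, y) ds = ∫_{τ₀}^{τ₁} f̂(s, y) ds for every fixed y, and ĝ(t, ·) is Lipschitz with constant at most 1 for a.e. t. -/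
open MeasureTheory Set Filter
open scoped Topology

lemma aux_ae_hasDerivAt_primitive (ψ : ℝ → ℝ) (hψ : Integrable ψ) (c : ℝ) :
    ∀ᵐ x, HasDerivAt (fun y => ∫ s in c..y, ψ s) (ψ x) x := by
  have hloc : LocallyIntegrable ψ volume := hψ.locallyIntegrable
  have hii : ∀ a b : ℝ, IntervalIntegrable ψ volume a b := fun a b => hψ.intervalIntegrable
  filter_upwards [(IsUnifLocDoublingMeasure.vitaliFamily (volume : Measure ℝ) 1).ae_tendsto_average
    hloc] with x hx
  have L1 : Tendsto (slope (fun y => ∫ s in c..y, ψ s) x) (𝓝[>] x) (𝓝 (ψ x)) := by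
    apply Tendsto.congr' _ (hx.comp (Real.tendsto_Icc_vitaliFamily_right x))
    filter_upwards [self_mem_nhdsWithin]
    rintro y (hxy : x < y)
    simp only [Function.comp_apply]
    rw [slope_def_field, intervalIntegral.integral_interval_sub_left (hii c y) (hii c x),
      setAverage_eq, Real.volume_real_Icc_of_le hxy.le, intervalIntegral.integral_of_le hxy.le,
      ← integral_Icc_eq_integral_Ioc, smul_eq_mul,
      div_eq_inv_mul]
  have L2 : Tendsto (slope (fun y => ∫ s in c..y, ψ s) x) (𝓝[<] x) (𝓝 (ψ x)) := by
    apply Tendsto.congr' _ (hx.comp (Real.tendsto_Icc_vitaliFamily_left x))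
    filter_upwards [self_mem_nhdsWithin]
    rintro y (hxy : y < x)
    simp only [Function.comp_apply]
    rw [slope_def_field, intervalIntegral.integral_interval_sub_left (hii c y) (hii c x),
      intervalIntegral.integral_symm y x, intervalIntegral.integral_of_le hxy.le,
      ← integral_Icc_eq_integral_Ioc, setAverage_eq, Real.volume_real_Icc_of_le hxy.le,
      smul_eq_mul]
    have hne : y - x ≠ 0 := by linarith
    have hne' : x - y ≠ 0 := by linarith
    rw [eq_div_iff hne]
    field_simp
    ring
  rw [hasDerivAt_iff_tendsto_slope, ← nhdsLT_sup_nhdsGT, tendsto_sup]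
  exact ⟨L2, L1⟩

/-- change of time variable.  If `f̂(τ,·)` is Lipschitz with
time-dependent constant `φ(τ) ≥ 1` and `ĝ(t,y) := φ(τ(t))⁻¹ f̂(τ(t),y)`, then
the time integrals of `ĝ` and `f̂` agree and `ĝ(t,·)` is `1`-Lipschitz a.e. -/
theorem stmt7 (m k : ℕ) (τ₀ τ₁ t₀ : ℝ) (h : τ₀ ≤ τ₁) (φ : ℝ → ℝ)
    (hint : IntegrableOn φ (Icc τ₀ τ₁))
    (hφ1 : ∀ᵐ s ∂(volume.restrict (Icc τ₀ τ₁)), 1 ≤ φ s)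
    (f : ℝ → EuclideanSpace ℝ (Fin m) → EuclideanSpace ℝ (Fin k))
    (hmeas : ∀ y, AEStronglyMeasurable (fun τ => f τ y) (volume.restrict (Icc τ₀ τ₁)))
    (hLip : ∀ᵐ τ ∂(volume.restrict (Icc τ₀ τ₁)),
      ∀ y y', ‖f τ y - f τ y'‖ ≤ φ τ * ‖y - y'‖)
    (t : ℝ → ℝ) (ht : ∀ τ, t τ = t₀ + ∫ s in τ₀..τ, φ s)
    (τinv : ℝ → ℝ)
    (hinv₁ : ∀ τ ∈ Icc τ₀ τ₁, τinv (t τ) = τ)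
    (hinv₂ : ∀ s ∈ Icc t₀ (t τ₁), t (τinv s) = s ∧ τinv s ∈ Icc τ₀ τ₁)
    (g : ℝ → EuclideanSpace ℝ (Fin m) → EuclideanSpace ℝ (Fin k))
    (hg : ∀ s y, g s y = (φ (τinv s))⁻¹ • f (τinv s) y) :
    (∀ y, ∫ s in t₀..(t τ₁), g s y = ∫ s in τ₀..τ₁, f s y) ∧
      ∀ᵐ s ∂(volume.restrict (Icc t₀ (t τ₁))),
        ∀ y y', ‖g s y - g s y'‖ ≤ ‖y - y'‖ := by
  classical
  have hii : ∀ a b, a ∈ Icc τ₀ τ₁ → b ∈ Icc τ₀ τ₁ → IntervalIntegrable φ volume a b := by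
    intro a b ha hb
    rw [intervalIntegrable_iff]
    exact hint.mono_set (uIoc_subset_uIcc.trans (uIcc_subset_Icc ha hb))
  have hdiff2 : ∀ a b, a ∈ Icc τ₀ τ₁ → b ∈ Icc τ₀ τ₁ → t b - t a = ∫ s in a..b, φ s := by
    intro a b ha hb
    have h2 := intervalIntegral.integral_interval_sub_left
      (hii τ₀ b (left_mem_Icc.2 h) hb) (hii τ₀ a (left_mem_Icc.2 h) ha)
    rw [ht, ht]
    linarith
  have hlow : ∀ a b, a ∈ Icc τ₀ τ₁ → b ∈ Icc τ₀ τ₁ → a ≤ b → b - a ≤ ∫ s in a..b, φ s := by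
    intro a b ha hb hab
    rw [intervalIntegral.integral_of_le hab]
    have hsub : Ioc a b ⊆ Icc τ₀ τ₁ := Ioc_subset_Icc_self.trans (Icc_subset_Icc ha.1 hb.2)
    have h1 : ∀ᵐ s ∂(volume.restrict (Ioc a b)), 1 ≤ φ s :=
      ae_restrict_of_ae_restrict_of_subset hsub hφ1
    have h2 : ∫ s in Ioc a b, (1:ℝ) ≤ ∫ s in Ioc a b, φ s :=
      integral_mono_ae (integrable_const 1) (hint.mono_set hsub) h1
    simp [Real.volume_Ioc, ENNReal.toReal_ofReal (sub_nonneg.2 hab)] at h2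
    linarith [h2.1]
  have hmono : StrictMonoOn t (Icc τ₀ τ₁) := by
    intro a ha b hb hab
    have h2 := hlow a b ha hb hab.le
    have h3 := hdiff2 a b ha hb
    linarith
  have ht0 : t τ₀ = t₀ := by rw [ht]; simp
  have h01 : t₀ ≤ t τ₁ := by
    have h2 := hlow τ₀ τ₁ (left_mem_Icc.2 h) (right_mem_Icc.2 h) h
    have h3 := hdiff2 τ₀ τ₁ (left_mem_Icc.2 h) (right_mem_Icc.2 h)
    linarith [ht0]
  set ψ : ℝ → ℝ := (Icc τ₀ τ₁).indicator φ with hψdef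
  have hψint : Integrable ψ := (integrable_indicator_iff measurableSet_Icc).2 hint
  set F : ℝ → ℝ := fun y => ∫ s in τ₀..y, ψ s with hFdef
  have htF : ∀ x ∈ Icc τ₀ τ₁, t x = t₀ + F x := by
    intro x hx
    rw [ht]
    have heq : (∫ s in τ₀..x, φ s) = ∫ s in τ₀..x, ψ s := by
      rw [intervalIntegral.integral_of_le hx.1, intervalIntegral.integral_of_le hx.1]
      exact (setIntegral_congr_fun measurableSet_Ioc (fun s hs =>
        indicator_of_mem ((Ioc_subset_Icc_self.trans (Icc_subset_Icc le_rfl hx.2)) hs) φ)).symm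
    rw [heq]
  have hDae : ∀ᵐ x ∂(volume : Measure ℝ), HasDerivAt F (ψ x) x :=
    aux_ae_hasDerivAt_primitive ψ hψint τ₀
  set P : ℝ → Prop := fun τ => 1 ≤ φ τ ∧ (∀ y y', ‖f τ y - f τ y'‖ ≤ φ τ * ‖y - y'‖)
      ∧ HasDerivAt F (ψ τ) τ with hPdef
  have hGae : ∀ᵐ τ ∂(volume.restrict (Icc τ₀ τ₁)), P τ := by
    filter_upwards [hφ1, hLip, ae_restrict_of_ae hDae] with τ h1 h2 h3
    exact ⟨h1, h2, h3⟩
  have hB : volume ({τ | ¬ P τ} ∩ Icc τ₀ τ₁) = 0 := by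
    rw [← Measure.restrict_apply' measurableSet_Icc]
    exact ae_iff.mp hGae
  set E : Set ℝ := Ioo τ₀ τ₁ \ toMeasurable volume ({τ | ¬ P τ} ∩ Icc τ₀ τ₁) with hEdef
  have hEm : MeasurableSet E := measurableSet_Ioo.diff (measurableSet_toMeasurable _ _)
  have hEIcc : E ⊆ Icc τ₀ τ₁ := fun x hx => Ioo_subset_Icc_self hx.1
  have hEP : ∀ x ∈ E, P x := by
    intro x hx
    by_contra hPx
    exact hx.2 (subset_toMeasurable _ _ ⟨hPx, hEIcc hx⟩)
  have hIooE : volume (Ioo τ₀ τ₁ \ E) = 0 := by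
    apply measure_mono_null (fun x hx => ?_) ((measure_toMeasurable _).trans hB)
    by_contra hc
    exact hx.2 ⟨hx.1, hc⟩
  have hEIoc : E =ᵐ[volume] Ioc τ₀ τ₁ := by
    rw [ae_eq_set]
    constructor
    · exact measure_mono_null (fun x hx => (hx.2 (Ioo_subset_Ioc_self hx.1.1)).elim) measure_empty
    · have hsub : Ioc τ₀ τ₁ \ E ⊆ {τ₁} ∪ (Ioo τ₀ τ₁ \ E) := by
        intro x hx
        rcases eq_or_lt_of_le hx.1.2 with h1 | h1
        · exact Or.inl h1
        · exact Or.inr ⟨⟨hx.1.1, h1⟩, hx.2⟩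
      exact measure_mono_null hsub (measure_union_null (measure_singleton τ₁) hIooE)
  have hderiv : ∀ x ∈ E, HasDerivWithinAt t (φ x) E x := by
    intro x hx
    have hxIcc := hEIcc hx
    have hψx : ψ x = φ x := indicator_of_mem hxIcc φ
    have hd' : HasDerivAt (fun y => t₀ + F y) (φ x) x := by
      rw [← hψx]; exact ((hEP x hx).2.2).const_add t₀
    exact (hd'.hasDerivWithinAt).congr (fun y hy => htF y (hEIcc hy)) (htF x hxIcc)
  have hinj : InjOn t E := (hmono.injOn).mono hEIcc
  have hFc : Continuous F := intervalIntegral.continuous_primitive (fun a b => hψint.intervalIntegrable) τ₀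
  have htc : ContinuousOn t E :=
    ((continuous_const.add hFc).continuousOn).congr (fun y hy => htF y (hEIcc hy))
  have hEim : MeasurableSet (t '' E) := hEm.image_of_continuousOn_injOn htc hinj
  have hEphi : ∫ x in E, φ x = t τ₁ - t₀ := by
    have h3 := hdiff2 τ₀ τ₁ (left_mem_Icc.2 h) (right_mem_Icc.2 h)
    rw [setIntegral_congr_set hEIoc, ← intervalIntegral.integral_of_le h, ← h3, ht0]
  have him1 : (volume (t '' E)).toReal = t τ₁ - t₀ := by
    have h1 := integral_image_eq_integral_abs_deriv_smul hEm hderiv hinj (fun _ => (1:ℝ))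
    rw [setIntegral_const, smul_eq_mul, mul_one] at h1
    simp only [smul_eq_mul, mul_one] at h1
    rw [← measureReal_def, h1, ← hEphi]
    exact setIntegral_congr_fun hEm
      (fun x hx => abs_of_pos (lt_of_lt_of_le one_pos (hEP x hx).1))
  have himsub : t '' E ⊆ Ioc t₀ (t τ₁) := by
    rintro s ⟨x, hx, rfl⟩
    have hxI : x ∈ Ioo τ₀ τ₁ := hx.1
    constructor
    · rw [← ht0]
      exact hmono (left_mem_Icc.2 h) (hEIcc hx) hxI.1
    · exact (hmono (hEIcc hx) (right_mem_Icc.2 h) hxI.2).le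
  have hvol : volume (t '' E) = ENNReal.ofReal (t τ₁ - t₀) := by
    have hle : volume (t '' E) ≤ ENNReal.ofReal (t τ₁ - t₀) := by
      rw [← Real.volume_Ioc]
      exact measure_mono himsub
    have hfin : volume (t '' E) ≠ ⊤ := (lt_of_le_of_lt hle ENNReal.ofReal_lt_top).ne
    rw [← ENNReal.ofReal_toReal hfin, him1]
  have hImIoc : t '' E =ᵐ[volume] Ioc t₀ (t τ₁) := by
    rw [ae_eq_set]
    have h0 : t '' E \ Ioc t₀ (t τ₁) = ∅ := by
      rw [diff_eq_empty]; exact himsub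
    refine ⟨by rw [h0]; exact measure_empty, ?_⟩
    have hd : volume (Ioc t₀ (t τ₁) \ t '' E) = volume (Ioc t₀ (t τ₁)) - volume (t '' E) :=
      measure_diff himsub hEim.nullMeasurableSet (by rw [hvol]; exact ENNReal.ofReal_ne_top)
    rw [hd, Real.volume_Ioc, hvol, tsub_self]
  constructor
  · intro y
    rw [intervalIntegral.integral_of_le h01, intervalIntegral.integral_of_le h,
      ← setIntegral_congr_set hImIoc,
      integral_image_eq_integral_abs_deriv_smul hEm hderiv hinj,
      ← setIntegral_congr_set hEIoc]
    apply setIntegral_congr_fun hEm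
    intro x hx
    have hx1 : (1:ℝ) ≤ φ x := (hEP x hx).1
    have hφpos : (0:ℝ) < φ x := lt_of_lt_of_le one_pos hx1
    simp only
    rw [hg, hinv₁ x (hEIcc hx), abs_of_pos hφpos, smul_smul, mul_inv_cancel₀ hφpos.ne', one_smul]
  · have hnull : volume (Icc t₀ (t τ₁) \ t '' E) = 0 := by
      have hsub : Icc t₀ (t τ₁) \ t '' E ⊆ {t₀} ∪ (Ioc t₀ (t τ₁) \ t '' E) := by
        intro x hx
        rcases eq_or_lt_of_le hx.1.1 with h1 | h1
        · exact Or.inl h1.symm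
        · exact Or.inr ⟨⟨h1, hx.1.2⟩, hx.2⟩
      exact measure_mono_null hsub
        (measure_union_null (measure_singleton t₀) (ae_eq_set.mp hImIoc).2)
    have hmem : ∀ᵐ s ∂(volume.restrict (Icc t₀ (t τ₁))), s ∈ t '' E := by
      rw [ae_iff, Measure.restrict_apply' measurableSet_Icc]
      have hss : {a : ℝ | ¬ a ∈ t '' E} ∩ Icc t₀ (t τ₁) ⊆ Icc t₀ (t τ₁) \ t '' E :=
        fun x hx => ⟨hx.2, hx.1⟩
      exact measure_mono_null hss hnull
    filter_upwards [hmem] with s hs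
    intro y y'
    obtain ⟨x, hxE, rfl⟩ := hs
    have hx1 : (1:ℝ) ≤ φ x := (hEP x hxE).1
    have hφpos : (0:ℝ) < φ x := lt_of_lt_of_le one_pos hx1
    have hL := (hEP x hxE).2.1 y y'
    rw [hg, hg, hinv₁ x (hEIcc hxE), ← smul_sub, norm_smul, Real.norm_eq_abs,
      abs_of_pos (inv_pos.2 hφpos)]
    calc (φ x)⁻¹ * ‖f x y - f x y'‖ ≤ (φ x)⁻¹ * (φ x * ‖y - y'‖) :=
          mul_le_mul_of_nonneg_left hL (inv_nonneg.2 hφpos.le)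
      _ = ‖y - y'‖ := by field_simp
end

section
/- Let H : [t₀,t₁] × U → ℝ be integrable in t for each u and continuous in u for a.e. t, where U is a compact metric space, and let (uₖ) be a countable family of measurable controls uₖ : [t₀,t₁] → U such that {uₖ(t) : k ∈ ℕ} is dense in U(t) for a.e. t. Suppose that for each k there is a null set Z_k with H(t, uₖ(t)) − m(t) ≥ 0 for all t ∉ Z_k, where m(t) := ∫ H(t,u) σ̄(t)(du) for a measurable family of probability measures σ̄(t) supported on U(t). Then for a.e. t ∈ [t₀,t₁], m(t) = inf_k H(t, uₖ(t)) = min_{u ∈ U(t)} H(t, u). -/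
open MeasureTheory Set

/-- Step 4 of Theorem 9.2 (pointwise Pontryagin minimum
condition): if `m(t) ≤ H(t, uₖ(t))` outside null sets for a countable dense
family of controls, then a.e. `m(t)` equals the infimum over the family and the
minimum of `H(t,·)` over `U(t)` (which is attained). -/
theorem stmt15 {U : Type*} [MetricSpace U] [CompactSpace U]
    [MeasurableSpace U] [BorelSpace U]
    (t₀ t₁ : ℝ) (h : t₀ ≤ t₁)
    (Uset : ℝ → Set U) (hUc : ∀ t, IsCompact (Uset t)) (hUne : ∀ t, (Uset t).Nonempty)
    (σ : ℝ → Measure U) [∀ t, IsProbabilityMeasure (σ t)]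
    (hσ : ∀ᵐ t ∂(volume.restrict (Icc t₀ t₁)), σ t (Uset t) = 1)
    (H : ℝ → U → ℝ)
    (hHt : ∀ u, IntegrableOn (fun t => H t u) (Icc t₀ t₁))
    (hHu : ∀ᵐ t ∂(volume.restrict (Icc t₀ t₁)), Continuous (H t))
    (hHσ : ∀ᵐ t ∂(volume.restrict (Icc t₀ t₁)), Integrable (H t) (σ t))
    (m : ℝ → ℝ) (hm : ∀ t, m t = ∫ u, H t u ∂(σ t))
    (uk : ℕ → ℝ → U) (hukmeas : ∀ k, Measurable (uk k))
    (hukmem : ∀ᵐ t ∂(volume.restrict (Icc t₀ t₁)), ∀ k, uk k t ∈ Uset t)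
    (hdense : ∀ᵐ t ∂(volume.restrict (Icc t₀ t₁)),
      Uset t ⊆ closure (Set.range fun k => uk k t))
    (hmin : ∀ k, ∀ᵐ t ∂(volume.restrict (Icc t₀ t₁)), m t ≤ H t (uk k t)) :
    ∀ᵐ t ∂(volume.restrict (Icc t₀ t₁)),
      m t = ⨅ k, H t (uk k t) ∧
        ∃ x ∈ Uset t, H t x = m t ∧ ∀ y ∈ Uset t, m t ≤ H t y := by
  have hmin' : ∀ᵐ t ∂(volume.restrict (Icc t₀ t₁)), ∀ k, m t ≤ H t (uk k t) :=
    (MeasureTheory.ae_all_iff).2 hmin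
  filter_upwards [hσ, hHu, hHσ, hukmem, hdense, hmin'] with t hσ1 hc hint hmem hd hineq
  -- a.e. membership in Uset t w.r.t. σ t
  have hUm : MeasurableSet (Uset t) := (hUc t).isClosed.measurableSet
  have haemem : ∀ᵐ u ∂(σ t), u ∈ Uset t := by
    rw [MeasureTheory.ae_iff]
    have : σ t (Uset t)ᶜ = 0 := by
      have := measure_compl hUm (measure_ne_top (σ t) _)
      rw [hσ1] at this
      simpa [measure_univ] using this
    exact this
  -- key: m t ≤ H t y for all y ∈ Uset t
  have hge : ∀ y ∈ Uset t, m t ≤ H t y := by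
    intro y hy
    obtain ⟨xn, hxn, hlim⟩ := mem_closure_iff_seq_limit.1 (hd hy)
    have hten : Filter.Tendsto (fun n => H t (xn n)) Filter.atTop (nhds (H t y)) :=
      (hc.continuousAt.tendsto).comp hlim
    refine ge_of_tendsto' hten ?_
    intro n
    obtain ⟨k, hk⟩ := hxn n
    rw [← hk]
    exact hineq k
  -- zero integral of nonneg function
  have hzero : ∫ u, (H t u - m t) ∂(σ t) = 0 := by
    rw [integral_sub hint (integrable_const _), integral_const]
    simp [measure_univ, (hm t).symm]
  have hnn : 0 ≤ᵐ[σ t] fun u => H t u - m t := by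
    filter_upwards [haemem] with u hu
    simpa using hge u hu
  have hintsub : Integrable (fun u => H t u - m t) (σ t) :=
    hint.sub (integrable_const _)
  have heq0 : (fun u => H t u - m t) =ᵐ[σ t] 0 :=
    (integral_eq_zero_iff_of_nonneg_ae hnn hintsub).1 hzero
  have : ∀ᵐ u ∂(σ t), u ∈ Uset t ∧ H t u = m t := by
    filter_upwards [haemem, heq0] with u hu hz
    exact ⟨hu, by linarith [sub_eq_zero.1 (by simpa using hz)]⟩
  have hne : (MeasureTheory.ae (σ t)).NeBot :=
    MeasureTheory.ae_neBot.2 (IsProbabilityMeasure.ne_zero (σ t))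
  obtain ⟨x, hxU, hxeq⟩ := this.exists
  -- infimum
  have hbdd : BddBelow (Set.range fun k => H t (uk k t)) :=
    ⟨m t, by rintro r ⟨k, rfl⟩; exact hineq k⟩
  have hle1 : m t ≤ ⨅ k, H t (uk k t) := le_ciInf hineq
  have hle2 : (⨅ k, H t (uk k t)) ≤ m t := by
    rw [← hxeq]
    obtain ⟨xn, hxn, hlim⟩ := mem_closure_iff_seq_limit.1 (hd hxU)
    have hten : Filter.Tendsto (fun n => H t (xn n)) Filter.atTop (nhds (H t x)) :=
      (hc.continuousAt.tendsto).comp hlim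
    refine ge_of_tendsto' hten ?_
    intro n
    obtain ⟨k, hk⟩ := hxn n
    rw [← hk]
    exact ciInf_le hbdd k
  exact ⟨le_antisymm hle1 hle2, x, hxU, hxeq, hge⟩
end
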